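/- Let B > 0, C < 1, ε ≤ C, and M = ((1-C)·B·κ_n)^(1/(1-ε)) where κ_n = 1/(n(n+1)). Suppose u : D₁ → ℝ is C² on the open unit ball D₁ ⊆ ℝⁿ, u(x) > 0 for all x ∈ D₁, and u(x)·Δu(x) ≥ B·|u(x)|^(1+ε) + C·|∇u(x)|² for all x ∈ D₁. Then sup_{x ∈ D₁} u(x) > M. -/

import Mathlib

set_option maxHeartbeats 1000000

open Filter Real Set


lemma aux_sdt {f D : ℝ → ℝ} {d : ℝ}
    (hfD : ∀ᶠ t in nhds (0:ℝ), HasDerivAt f (D t) t)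
    (hD : HasDerivAt D d 0) (hmax : IsLocalMax f 0) : d ≤ 0 := by
  by_contra hd
  push_neg at hd
  have hD0 : D 0 = 0 := by
    have h1 := hmax.deriv_eq_zero
    rwa [hfD.self_of_nhds.deriv] at h1
  have hslope : Tendsto (slope D 0) (nhdsWithin 0 {(0:ℝ)}ᶜ) (nhds d) :=
    hasDerivAt_iff_tendsto_slope.mp hD
  have hpos : ∀ᶠ t in nhdsWithin 0 {(0:ℝ)}ᶜ, 0 < slope D 0 t :=
    hslope.eventually (eventually_gt_nhds hd)
  have hall : ∀ᶠ t in nhds (0:ℝ), (t ∈ ({(0:ℝ)}ᶜ : Set ℝ) → 0 < slope D 0 t) ∧ HasDerivAt f (D t) t ∧ f t ≤ f 0 :=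
    (eventually_nhdsWithin_iff.mp hpos).and (hfD.and hmax)
  obtain ⟨δ, hδ, hball⟩ := Metric.eventually_nhds_iff.mp hall
  have hδ2 : 0 < δ/2 := by linarith
  have hmem : ∀ t ∈ Icc (0:ℝ) (δ/2), dist t 0 < δ := by
    intro t ht
    rw [Real.dist_eq, sub_zero, abs_of_nonneg ht.1]
    linarith [ht.2]
  have hcont : ContinuousOn f (Icc 0 (δ/2)) := fun t ht =>
    ((hball (hmem t ht)).2.1.differentiableAt.continuousAt).continuousWithinAt
  have hderiv : ∀ t ∈ interior (Icc (0:ℝ) (δ/2)), 0 < deriv f t := by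
    intro t ht
    rw [interior_Icc] at ht
    have h1 := hball (hmem t (Ioo_subset_Icc_self ht))
    rw [h1.2.1.deriv]
    have hs := h1.1 (by simpa using ne_of_gt ht.1)
    have hslope_eq : slope D 0 t = D t / t := by
      simp [slope_def_field, hD0]
    rw [hslope_eq] at hs
    have h2 : 0 < (D t / t) * t := mul_pos hs ht.1
    rwa [div_mul_cancel₀ _ (ne_of_gt ht.1)] at h2
  have hmono := strictMonoOn_of_deriv_pos (convex_Icc (0:ℝ) (δ/2)) hcont hderiv
  have h2 := hmono (left_mem_Icc.2 hδ2.le) (right_mem_Icc.2 hδ2.le) hδ2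
  have h3 := (hball (hmem _ (right_mem_Icc.2 hδ2.le))).2.2
  linarith


lemma aux_line {E : Type*} [NormedAddCommGroup E] [InnerProductSpace ℝ E]
    {u : E → ℝ} {s : Set E} (hs : IsOpen s) (hu : ContDiffOn ℝ 2 u s)
    (hposu : ∀ x ∈ s, 0 < u x) {z : E} (hz : z ∈ s) (v : E) (q a : ℝ) :
    ∃ D : ℝ → ℝ,
      (∀ᶠ t in nhds (0:ℝ),
        HasDerivAt (fun t : ℝ => u (z + t • v) ^ q - a * ‖z + t • v‖ ^ 2) (D t) t) ∧
      HasDerivAt D (q * (q - 1) * u z ^ (q - 2) * (fderiv ℝ u z v) ^ 2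
        + q * u z ^ (q - 1) * (fderiv ℝ (fderiv ℝ u) z v v) - a * (2 * ‖v‖ ^ 2)) 0 := by
  classical
  set L : ℝ → E := fun t => z + t • v with hLdef
  have hL0 : L 0 = z := by simp [hLdef]
  have hLc : Continuous L := by fun_prop
  have hT : ∀ᶠ t in nhds (0:ℝ), L t ∈ s := by
    have := hLc.continuousAt (x := (0:ℝ))
    exact this.preimage_mem_nhds (hs.mem_nhds (by rw [hL0] at *; exact hz))
  have hLd : ∀ t : ℝ, HasDerivAt L v t := by
    intro t
    simpa [hLdef] using ((hasDerivAt_id t).smul_const v).const_add z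
  have hud : DifferentiableOn ℝ u s := hu.differentiableOn (by norm_num)
  have hfd : ContDiffOn ℝ 1 (fderiv ℝ u) s := hu.fderiv_of_isOpen hs (by norm_num)
  have hfdd : DifferentiableOn ℝ (fderiv ℝ u) s := hfd.differentiableOn (by norm_num)
  have h1 : ∀ t : ℝ, L t ∈ s → HasDerivAt (fun t => u (L t)) (fderiv ℝ u (L t) v) t := by
    intro t ht
    exact ((hud.differentiableAt (hs.mem_nhds ht)).hasFDerivAt).comp_hasDerivAt t (hLd t)
  have hns : ∀ t : ℝ, ‖L t‖^2 = ‖z‖^2 + 2 * inner ℝ z v * t + ‖v‖^2 * t^2 := by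
    intro t
    simp only [hLdef]
    rw [norm_add_sq_real, real_inner_smul_right, norm_smul, mul_pow, Real.norm_eq_abs, sq_abs]
    ring
  have hfun : (fun t : ℝ => u (L t) ^ q - a * ‖L t‖ ^ 2)
      = fun t : ℝ => u (L t) ^ q - a * (‖z‖^2 + 2 * inner ℝ z v * t + ‖v‖^2 * t^2) := by
    funext t
    rw [hns t]
  refine ⟨fun t => q * (u (L t) ^ (q - 1) * (fderiv ℝ u (L t) v))
      - a * (2 * inner ℝ z v + ‖v‖^2 * (2 * t)), ?_, ?_⟩
  · rw [show (fun t : ℝ => u (z + t • v) ^ q - a * ‖z + t • v‖ ^ 2)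
      = (fun t : ℝ => u (L t) ^ q - a * ‖L t‖ ^ 2) from rfl, hfun]
    filter_upwards [hT] with t ht
    have h2 := (h1 t ht).rpow_const (p := q) (Or.inl (ne_of_gt (hposu _ ht)))
    have h3 : HasDerivAt (fun t : ℝ => ‖z‖^2 + 2 * inner ℝ z v * t + ‖v‖^2 * t^2)
        (2 * inner ℝ z v + ‖v‖^2 * (2 * t)) t := by
      have h31 : HasDerivAt (fun t : ℝ => 2 * inner ℝ z v * t) (2 * inner ℝ z v) t := by
        simpa using (hasDerivAt_id t).const_mul (2 * (inner ℝ z v : ℝ))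
      have h32 : HasDerivAt (fun t : ℝ => ‖v‖^2 * t^2) (‖v‖^2 * (2 * t)) t := by
        simpa using (hasDerivAt_pow 2 t).const_mul (‖v‖^2)
      exact (h31.const_add (‖z‖^2)).add h32
    have := h2.sub (h3.const_mul a)
    refine this.congr_deriv ?_
    ring
  · have hz0 : L 0 ∈ s := by rw [hL0]; exact hz
    have hA := ((h1 0 hz0).rpow_const (p := q - 1) (Or.inl (ne_of_gt (hposu _ hz0))))
    have hB : HasDerivAt (fun t => fderiv ℝ u (L t) v) (fderiv ℝ (fderiv ℝ u) z v v) 0 := by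
      have hF : HasDerivAt (fun t => fderiv ℝ u (L t)) (fderiv ℝ (fderiv ℝ u) z v) 0 := by
        have := ((hfdd.differentiableAt (hs.mem_nhds hz0)).hasFDerivAt).comp_hasDerivAt 0 (hLd 0)
        rwa [hL0] at this
      exact (ContinuousLinearMap.apply ℝ ℝ v).hasFDerivAt.comp_hasDerivAt 0 hF
    have hAB := hA.mul hB
    have hlin : HasDerivAt (fun t : ℝ => a * (2 * inner ℝ z v + ‖v‖^2 * (2 * t)))
        (a * (‖v‖^2 * 2)) 0 := by
      have h5 : HasDerivAt (fun t : ℝ => 2 * (inner ℝ z v : ℝ) + ‖v‖^2 * (2 * t)) (‖v‖^2 * 2) 0 := by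
        simpa using (((hasDerivAt_id (0:ℝ)).const_mul (2:ℝ)).const_mul (‖v‖^2)).const_add
          (2 * (inner ℝ z v : ℝ))
      exact h5.const_mul a
    have hfin := (hAB.const_mul q).sub hlin
    rw [hL0] at hfin
    refine hfin.congr_deriv ?_
    rw [show q - 1 - 1 = q - 2 by ring]
    ring

noncomputable def lap {n : ℕ} (u : EuclideanSpace ℝ (Fin n) → ℝ)
    (x : EuclideanSpace ℝ (Fin n)) : ℝ :=
  ∑ i, iteratedFDeriv ℝ 2 u x ![EuclideanSpace.single i 1, EuclideanSpace.single i 1]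

theorem stmt16 (n : ℕ) (hn : 1 ≤ n) (B C ε : ℝ) (hB : 0 < B) (hC : C < 1) (hεC : ε ≤ C)
    (M : ℝ) (hM : M = ((1 - C) * B * (1 / (n * (n + 1)))) ^ (1 / (1 - ε)))
    (u : EuclideanSpace ℝ (Fin n) → ℝ)
    (hC2 : ContDiffOn ℝ 2 u (Metric.ball 0 1))
    (hpos : ∀ x ∈ Metric.ball (0 : EuclideanSpace ℝ (Fin n)) 1, 0 < u x)
    (hineq : ∀ x ∈ Metric.ball (0 : EuclideanSpace ℝ (Fin n)) 1,
      u x * lap u x ≥ B * |u x| ^ (1 + ε) + C * ‖gradient u x‖ ^ 2) :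
    ∃ x ∈ Metric.ball (0 : EuclideanSpace ℝ (Fin n)) 1, M < u x := by
  by_contra hcon
  push_neg at hcon
  have hn' : (1:ℝ) ≤ (n:ℝ) := by exact_mod_cast hn
  have h1C : (0:ℝ) < 1 - C := by linarith
  have h1ε : (0:ℝ) < 1 - ε := by linarith
  have hbase : (0:ℝ) < (1 - C) * B * (1 / ((n:ℝ) * ((n:ℝ) + 1))) := by positivity
  have hMpos : 0 < M := by
    rw [hM]; exact Real.rpow_pos_of_pos hbase _
  have hMe : M ^ (1 - ε) = (1 - C) * B * (1 / ((n:ℝ) * ((n:ℝ) + 1))) := by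
    rw [hM, one_div (1 - ε), Real.rpow_inv_rpow hbase.le (ne_of_gt h1ε)]
  set K := M ^ (1 - C) with hK
  set c := (1 - C) * B * M ^ (ε - C) with hc
  have hMεC : 0 < M ^ (ε - C) := Real.rpow_pos_of_pos hMpos _
  have hcpos : 0 < c := by rw [hc]; positivity
  have hKc : c * (1 / ((n:ℝ) * ((n:ℝ) + 1))) = K := by
    rw [hc, hK]
    have h2 : M ^ (1 - ε) * M ^ (ε - C) = M ^ (1 - C) := by
      rw [← Real.rpow_add hMpos]; congr 1; ring
    calc (1 - C) * B * M ^ (ε - C) * (1 / ((n:ℝ) * ((n:ℝ) + 1)))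
        = (1 - C) * B * (1 / ((n:ℝ) * ((n:ℝ) + 1))) * M ^ (ε - C) := by ring
      _ = M ^ (1 - ε) * M ^ (ε - C) := by rw [hMe]
      _ = M ^ (1 - C) := h2
  have hball0 : (0 : EuclideanSpace ℝ (Fin n)) ∈ Metric.ball (0 : EuclideanSpace ℝ (Fin n)) 1 := by
    simp
  have hu0 : 0 < u 0 := hpos 0 hball0
  set η := u 0 ^ (1 - C) with hη
  have hηpos : 0 < η := Real.rpow_pos_of_pos hu0 _
  set A := c / (2 * (n:ℝ)) with hA
  have hApos : 0 < A := by rw [hA]; positivity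
  have hKA : K < A + η := by
    have h2n : 1 / ((n:ℝ) * ((n:ℝ) + 1)) ≤ 1 / (2 * (n:ℝ)) := by
      apply one_div_le_one_div_of_le
      · positivity
      · nlinarith
    have : c * (1 / ((n:ℝ) * ((n:ℝ) + 1))) ≤ c * (1 / (2 * (n:ℝ))) :=
      mul_le_mul_of_nonneg_left h2n hcpos.le
    have hA' : c * (1 / (2 * (n:ℝ))) = A := by rw [hA]; ring
    linarith [hKc ▸ this, hA' ▸ this]
  set t0 := max (K - η) 0 with ht0
  have ht0A : t0 < A := by
    rw [ht0]; apply max_lt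
    · linarith
    · exact hApos
  have ht0nn : 0 ≤ t0 := le_max_right _ _
  set a := (t0 + A) / 2 with ha
  have hat0 : t0 < a := by rw [ha]; linarith
  have haA : a < A := by rw [ha]; linarith
  have hapos : 0 < a := lt_of_le_of_lt ht0nn hat0
  set ρ := (t0 / a + 1) / 2 with hρ
  have hρ1 : ρ < 1 := by
    rw [hρ]
    have : t0 / a < 1 := (div_lt_one hapos).2 hat0
    linarith
  have hρpos : 0 < ρ := by rw [hρ]; positivity
  have hρt : t0 < a * ρ := by
    rw [hρ]
    rw [show a * ((t0 / a + 1) / 2) = (a * (t0 / a) + a) / 2 by ring,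
      mul_div_cancel₀ _ (ne_of_gt hapos)]
    linarith
  set r := Real.sqrt ρ with hr
  have hr0 : 0 < r := Real.sqrt_pos.2 hρpos
  have hr2 : r ^ 2 = ρ := Real.sq_sqrt hρpos.le
  have hr1 : r < 1 := by
    nlinarith [hr2, hρ1, hr0]
  have hsub : Metric.closedBall (0 : EuclideanSpace ℝ (Fin n)) r ⊆
      Metric.ball (0 : EuclideanSpace ℝ (Fin n)) 1 := Metric.closedBall_subset_ball hr1
  set g := fun x : EuclideanSpace ℝ (Fin n) => u x ^ (1 - C) - a * ‖x‖ ^ 2 with hg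
  have hgc : ContinuousOn g (Metric.closedBall (0 : EuclideanSpace ℝ (Fin n)) r) := by
    apply ContinuousOn.sub
    · exact ContinuousOn.rpow_const ((hC2.continuousOn).mono hsub)
        (fun x _ => Or.inr h1C.le)
    · exact continuousOn_const.mul ((continuous_norm.pow 2).continuousOn)
  obtain ⟨z, hzmem, hzmax⟩ := (isCompact_closedBall (0 : EuclideanSpace ℝ (Fin n)) r).exists_isMaxOn
    ⟨0, Metric.mem_closedBall_self hr0.le⟩ hgc
  have hg0 : g 0 = η := by rw [hg]; simp [hη]
  have hg0z : η ≤ g z := by rw [← hg0]; exact hzmax (Metric.mem_closedBall_self hr0.le)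
  have hzball : z ∈ Metric.ball (0 : EuclideanSpace ℝ (Fin n)) 1 := hsub hzmem
  have huz : 0 < u z := hpos z hzball
  have huzM : u z ≤ M := hcon z hzball
  have hzn : ‖z‖ ≤ r := by simpa [Metric.mem_closedBall] using hzmem
  -- boundary case impossible
  have hzr : ‖z‖ < r := by
    rcases lt_or_eq_of_le hzn with h | h
    · exact h
    · exfalso
      have hK' : u z ^ (1 - C) ≤ K := Real.rpow_le_rpow huz.le huzM h1C.le
      have hgz : g z = u z ^ (1 - C) - a * r ^ 2 := by rw [hg]; simp only; rw [h]
      have hKη : K - η ≤ t0 := le_max_left _ _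
      have : g z ≤ K - a * ρ := by rw [hgz, hr2]; linarith
      linarith
  -- interior local max
  have hzball2 : z ∈ Metric.ball (0 : EuclideanSpace ℝ (Fin n)) r := by
    rw [Metric.mem_ball, dist_zero_right]; exact hzr
  have hnhds : Metric.closedBall (0 : EuclideanSpace ℝ (Fin n)) r ∈ nhds z :=
    Filter.mem_of_superset (Metric.isOpen_ball.mem_nhds hzball2) Metric.ball_subset_closedBall
  have hlocmax : IsLocalMax g z := hzmax.isLocalMax hnhds
  -- per-direction second derivative inequality
  have hnorm1 : ∀ i : Fin n, ‖(EuclideanSpace.single i (1:ℝ))‖ = 1 := by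
    intro i; rw [EuclideanSpace.norm_single]; norm_num
  have key : ∀ i : Fin n,
      (1 - C) * ((1 - C) - 1) * u z ^ ((1 - C) - 2)
          * (fderiv ℝ u z (EuclideanSpace.single i 1)) ^ 2
        + (1 - C) * u z ^ ((1 - C) - 1)
          * (fderiv ℝ (fderiv ℝ u) z (EuclideanSpace.single i 1) (EuclideanSpace.single i 1))
        - a * 2 ≤ 0 := by
    intro i
    obtain ⟨D, hD1, hD2⟩ := aux_line Metric.isOpen_ball hC2 hpos hzball
      (EuclideanSpace.single i 1) (1 - C) a
    have hmax' : IsLocalMax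
        (fun t : ℝ => u (z + t • (EuclideanSpace.single i (1:ℝ))) ^ (1 - C)
          - a * ‖z + t • (EuclideanSpace.single i (1:ℝ))‖ ^ 2) 0 := by
      have hLt : Tendsto (fun t : ℝ => z + t • (EuclideanSpace.single i (1:ℝ)))
          (nhds 0) (nhds z) := by
        have hc : Continuous fun t : ℝ => z + t • (EuclideanSpace.single i (1:ℝ)) := by
          fun_prop
        have := hc.continuousAt (x := (0:ℝ))
        simpa [ContinuousAt] using this
      have h0 : z + (0:ℝ) • (EuclideanSpace.single i (1:ℝ)) = z := by simp
      have hlm : IsMaxFilter g (nhds z) (z + (0:ℝ) • (EuclideanSpace.single i (1:ℝ))) := by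
        rw [h0]; exact hlocmax
      have h2 := IsMaxFilter.comp_tendsto
        (g := fun t : ℝ => z + t • (EuclideanSpace.single i (1:ℝ))) (b := (0:ℝ)) hlm hLt
      simpa [hg, Function.comp_def, h0, IsLocalMax] using h2
    have := aux_sdt hD1 hD2 hmax'
    have hone := hnorm1 i
    rw [hone] at this
    calc _ = (1 - C) * ((1 - C) - 1) * u z ^ ((1 - C) - 2)
          * (fderiv ℝ u z (EuclideanSpace.single i 1)) ^ 2
        + (1 - C) * u z ^ ((1 - C) - 1)
          * (fderiv ℝ (fderiv ℝ u) z (EuclideanSpace.single i 1) (EuclideanSpace.single i 1))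
        - a * (2 * (1:ℝ) ^ 2) := by ring
    _ ≤ 0 := this
  -- sum over directions
  set X := (1 - C) * ((1 - C) - 1) * u z ^ ((1 - C) - 2) with hX
  set Y := (1 - C) * u z ^ ((1 - C) - 1) with hY
  set p1 := fun i : Fin n => fderiv ℝ u z (EuclideanSpace.single i 1) with hp1
  set p2 := fun i : Fin n =>
    fderiv ℝ (fderiv ℝ u) z (EuclideanSpace.single i 1) (EuclideanSpace.single i 1) with hp2
  have hsum : ∑ i : Fin n, (X * p1 i ^ 2 + Y * p2 i - a * 2) ≤ 0 :=
    Finset.sum_nonpos (fun i _ => key i)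
  have hsplit : ∑ i : Fin n, (X * p1 i ^ 2 + Y * p2 i - a * 2)
      = X * (∑ i, p1 i ^ 2) + Y * (∑ i, p2 i) - n * (a * 2) := by
    rw [Finset.sum_sub_distrib, Finset.sum_add_distrib, ← Finset.mul_sum, ← Finset.mul_sum,
      Finset.sum_const, Finset.card_univ, Fintype.card_fin, nsmul_eq_mul]
  rw [hsplit] at hsum
  have hlap : lap u z = ∑ i, p2 i := by
    unfold lap
    apply Finset.sum_congr rfl
    intro i _
    rw [iteratedFDeriv_two_apply]
    simp [hp2]
  have hgradnorm : ‖gradient u z‖ ^ 2 = ∑ i, p1 i ^ 2 := by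
    have h1 : ∀ i, p1 i = gradient u z i := by
      intro i
      have h2 : (inner ℝ (gradient u z) (EuclideanSpace.single i (1:ℝ)) : ℝ)
          = fderiv ℝ u z (EuclideanSpace.single i 1) := by
        simp only [gradient]
        exact InnerProductSpace.toDual_symm_apply
      rw [EuclideanSpace.inner_single_right] at h2
      simp only [one_mul, starRingEnd_apply, star_trivial] at h2
      simp only [hp1]
      rw [← h2]
    have h3 : ‖gradient u z‖ ^ 2 = ∑ i, (gradient u z i) ^ 2 := by
      rw [EuclideanSpace.norm_eq, Real.sq_sqrt (by positivity)]
      apply Finset.sum_congr rfl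
      intro i _
      rw [Real.norm_eq_abs, sq_abs]
    rw [h3]
    apply Finset.sum_congr rfl
    intro i _
    rw [h1 i]
  have hiq := hineq z hzball
  rw [abs_of_pos huz, hlap, hgradnorm] at hiq
  set S := ∑ i, p1 i ^ 2 with hS
  set Lz := ∑ i, p2 i with hLz
  -- multiply PDE inequality by (1-C) * u z ^ ((1-C)-2)
  have e1 : u z ^ ((1 - C) - 2) * u z = u z ^ ((1 - C) - 1) := by
    have h4 := Real.rpow_add huz ((1 - C) - 2) 1
    rw [Real.rpow_one] at h4
    rw [← h4]
    congr 1; ring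
  have e2 : u z ^ ((1 - C) - 2) * u z ^ (1 + ε) = u z ^ (ε - C) := by
    rw [← Real.rpow_add huz]
    congr 1; ring
  have w0nn : 0 ≤ (1 - C) * u z ^ ((1 - C) - 2) := by positivity
  have hiq2 : (1 - C) * B * u z ^ (ε - C) + (1 - C) * C * (u z ^ ((1 - C) - 2) * S)
      ≤ Y * Lz := by
    have hmul := mul_le_mul_of_nonneg_left hiq w0nn
    have hq1 : (1 - C) * u z ^ ((1 - C) - 2) * (u z * Lz) = Y * Lz := by
      rw [hY, ← e1]; ring
    have hq2 : (1 - C) * u z ^ ((1 - C) - 2) * (B * u z ^ (1 + ε) + C * S)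
        = (1 - C) * B * u z ^ (ε - C) + (1 - C) * C * (u z ^ ((1 - C) - 2) * S) := by
      rw [← e2]; ring
    rw [hq1, hq2] at hmul
    exact hmul
  rw [hX] at hsum
  have hzero : (1 - C) * ((1 - C) - 1) * u z ^ ((1 - C) - 2) * S
      + (1 - C) * C * (u z ^ ((1 - C) - 2) * S) = 0 := by ring
  have hfinal : (1 - C) * B * u z ^ (ε - C) ≤ (n:ℝ) * (a * 2) := by
    linarith [hsum, hiq2, hzero]
  have hMu : M ^ (ε - C) ≤ u z ^ (ε - C) :=
    Real.rpow_le_rpow_of_nonpos huz huzM (by linarith)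
  have hcle : c ≤ (1 - C) * B * u z ^ (ε - C) := by
    rw [hc]
    exact mul_le_mul_of_nonneg_left hMu (by positivity)
  have h2an : (n:ℝ) * (a * 2) < c := by
    have hn0 : (0:ℝ) < 2 * (n:ℝ) := by linarith
    have h5 : a * (2 * (n:ℝ)) < A * (2 * (n:ℝ)) := mul_lt_mul_of_pos_right haA hn0
    rw [hA, div_mul_cancel₀ _ (ne_of_gt hn0)] at h5
    linarith
  linarith
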